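/- Completeness of the mental state calculus: for every mental state formula χ ∈ L_M, if ⊨_M χ (χ holds in every mental state) then ⊢_M χ. Equivalently, every ⊢_M-consistent mental state formula is satisfied by some mental state. -/

import Mathlib

/- Core: propositional language, classical entailment, mental states,
   mental state formulas and their semantics. -/

inductive PForm : Type where
  | atom : Nat → PForm
  | fals : PForm
  | impl : PForm → PForm → PForm

namespace PForm

def neg (p : PForm) : PForm := p.impl PForm.fals

def conj (p q : PForm) : PForm := (p.impl q.neg).neg

def iffF (p q : PForm) : PForm := (p.impl q).conj (q.impl p)

def eval (v : Nat → Bool) : PForm → Bool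
  | atom n => v n
  | fals => false
  | impl p q => !(p.eval v) || q.eval v

end PForm

/-- Classical semantic entailment `Γ ⊨_C φ`. -/
def CEntails (Γ : Set PForm) (φ : PForm) : Prop :=
  ∀ v : Nat → Bool, (∀ ψ ∈ Γ, ψ.eval v = true) → φ.eval v = true

/-- `⊨_C φ`. -/
def Taut (φ : PForm) : Prop := CEntails ∅ φ

/-- A pair ⟨Σ,Γ⟩ of a belief base and a goal base. -/
structure MState : Type where
  bel : Set PForm
  goals : Set PForm

/-- The conditions making a pair ⟨Σ,Γ⟩ a mental state. -/
def IsMState (m : MState) : Prop :=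
  ¬ CEntails m.bel PForm.fals ∧
  ∀ γ ∈ m.goals,
    (¬ CEntails m.bel γ ∧ ¬ Taut γ.neg) ∧
    ∀ γ' : PForm, Taut (γ.impl γ') → ¬ CEntails m.bel γ' → ¬ Taut γ'.neg →
      γ' ∈ m.goals

/-- Mental state formulas: Boolean combinations of atoms `B φ` and `G φ`. -/
inductive MForm : Type where
  | B : PForm → MForm
  | G : PForm → MForm
  | fals : MForm
  | impl : MForm → MForm → MForm

namespace MForm

def neg (χ : MForm) : MForm := χ.impl MForm.fals
def conj (a b : MForm) : MForm := (a.impl b.neg).neg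
def disj (a b : MForm) : MForm := a.neg.impl b
def iffF (a b : MForm) : MForm := (a.impl b).conj (b.impl a)

end MForm

/-- Truth of a mental state formula in a mental state: `⟨Σ,Γ⟩ ⊨_M χ`. -/
def MSat (m : MState) : MForm → Prop
  | .B φ => CEntails m.bel φ
  | .G φ => φ ∈ m.goals
  | .fals => False
  | .impl a b => MSat m a → MSat m b

/-- `⊨_M χ`: truth in every mental state. -/
def MValid (χ : MForm) : Prop := ∀ m : MState, IsMState m → MSat m χ

/- The proof system ⊢_M. -/

/-- Evaluation of a mental state formula viewing `B φ` and `G φ` as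
propositional atoms (for "instances of classical tautologies"). -/
def MForm.evalAt (vB vG : PForm → Bool) : MForm → Bool
  | .B φ => vB φ
  | .G φ => vG φ
  | .fals => false
  | .impl a b => !(a.evalAt vB vG) || b.evalAt vB vG

/-- The system ⊢_M. -/
inductive MProv : MForm → Prop where
  | taut (χ : MForm) :
      (∀ vB vG : PForm → Bool, χ.evalAt vB vG = true) → MProv χ
  | r2 (φ : PForm) : Taut φ → MProv (.B φ)
  | a1 (φ ψ : PForm) :
      MProv ((MForm.B (φ.impl ψ)).impl ((MForm.B φ).impl (MForm.B ψ)))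
  | a2 : MProv (MForm.B PForm.fals).neg
  | a3 : MProv (MForm.G PForm.fals).neg
  | a4 (φ : PForm) : MProv ((MForm.B φ).impl (MForm.G φ).neg)
  | a5 (φ ψ : PForm) : Taut (φ.impl ψ) →
      MProv ((MForm.B ψ).neg.impl ((MForm.G φ).impl (MForm.G ψ)))
  | mp (χ₁ χ₂ : MForm) : MProv (χ₁.impl χ₂) → MProv χ₁ → MProv χ₂


/- ===================== Auxiliary development ===================== -/

namespace MSAux
open Classical

noncomputable section

/-- A trivially provable formula. -/
def topM : MForm := MForm.fals.impl MForm.fals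

/-- `Bσ₁ → ⋯ → Bσₙ → t`. -/
def bImp (S : List PForm) (t : MForm) : MForm :=
  S.foldr (fun σ u => (MForm.B σ).impl u) t

lemma mp2 {a b : MForm} (h : MProv (a.impl b)) (ha : MProv a) : MProv b :=
  MProv.mp _ _ h ha

lemma mtaut (χ : MForm) (h : ∀ vB vG, χ.evalAt vB vG = true) : MProv χ :=
  MProv.taut χ h

lemma scheme1 (x y z : MForm) :
    MProv ((x.impl y).impl ((z.impl x).impl (z.impl y))) := by
  apply mtaut; intro vB vG
  simp only [MForm.evalAt]
  cases x.evalAt vB vG <;> cases y.evalAt vB vG <;> cases z.evalAt vB vG <;> rfl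

lemma scheme2 (p q z r : MForm) :
    MProv ((p.impl (z.impl q)).impl ((r.impl p).impl (z.impl (r.impl q)))) := by
  apply mtaut; intro vB vG
  simp only [MForm.evalAt]
  cases p.evalAt vB vG <;> cases q.evalAt vB vG <;> cases z.evalAt vB vG <;>
    cases r.evalAt vB vG <;> rfl

lemma schemeContra (x y : MForm) :
    MProv ((x.impl y).impl (y.neg.impl x.neg)) := by
  apply mtaut; intro vB vG
  simp only [MForm.neg, MForm.evalAt]
  cases x.evalAt vB vG <;> cases y.evalAt vB vG <;> rfl

lemma evalAt_bImp (S : List PForm) (t : MForm) (vB vG : PForm → Bool) :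
    (bImp S t).evalAt vB vG = true ↔
      ((∀ σ ∈ S, vB σ = true) → t.evalAt vB vG = true) := by
  induction S with
  | nil => simp [bImp]
  | cons σ T ih =>
    show ((MForm.B σ).impl (bImp T t)).evalAt vB vG = true ↔ _
    simp only [MForm.evalAt, List.mem_cons]
    cases h : vB σ <;> simp_all [ih]

lemma bImp_mono {x y : MForm} (S : List PForm) (h : MProv (x.impl y)) :
    MProv ((bImp S x).impl (bImp S y)) := by
  induction S with
  | nil => exact h
  | cons σ T ih => exact mp2 (scheme1 (bImp T x) (bImp T y) (MForm.B σ)) ih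

lemma bImp_swap (S : List PForm) (z w : MForm) :
    MProv ((bImp S (z.impl w)).impl (z.impl (bImp S w))) := by
  induction S with
  | nil =>
    apply mtaut; intro vB vG
    simp only [bImp, List.foldr, MForm.evalAt]
    cases z.evalAt vB vG <;> cases w.evalAt vB vG <;> rfl
  | cons σ T ih =>
    exact mp2 (scheme2 (bImp T (z.impl w)) (bImp T w) z (MForm.B σ)) ih

lemma centails_cons {σ : PForm} {T : List PForm} {φ : PForm}
    (h : CEntails {x | x ∈ σ :: T} φ) : CEntails {x | x ∈ T} (σ.impl φ) := by
  intro v hv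
  show (!(σ.eval v) || φ.eval v) = true
  cases hσ : σ.eval v
  · rfl
  · have : φ.eval v = true := by
      apply h v
      intro ψ hψ
      rcases List.mem_cons.mp hψ with rfl | hψ'
      · exact hσ
      · exact hv ψ hψ'
    simp [this]

lemma centails_mem {Sb : Set PForm} {σ : PForm} (h : σ ∈ Sb) : CEntails Sb σ :=
  fun v hv => hv σ h

lemma taut_refl (φ : PForm) : Taut (φ.impl φ) := by
  intro v _
  show (!(φ.eval v) || φ.eval v) = true
  cases φ.eval v <;> rfl

lemma taut_trans {a b c : PForm} (h1 : Taut (a.impl b)) (h2 : Taut (b.impl c)) :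
    Taut (a.impl c) := by
  intro v hv
  have e1 := h1 v hv
  have e2 := h2 v hv
  revert e1 e2
  show (!(a.eval v) || b.eval v) = true → (!(b.eval v) || c.eval v) = true →
    (!(a.eval v) || c.eval v) = true
  cases a.eval v <;> cases b.eval v <;> cases c.eval v <;> simp

lemma bImp_of_centails :
    ∀ (S : List PForm) (φ : PForm), CEntails {x | x ∈ S} φ →
      MProv (bImp S (MForm.B φ)) := by
  intro S
  induction S with
  | nil =>
    intro φ h
    refine MProv.r2 φ ?_
    intro v hv
    exact h v (fun ψ hψ => absurd hψ (by simp))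
  | cons σ T ih =>
    intro φ h
    have h1 : MProv (bImp T (MForm.B (σ.impl φ))) := ih _ (centails_cons h)
    have h2 : MProv (bImp T ((MForm.B σ).impl (MForm.B φ))) :=
      mp2 (bImp_mono T (MProv.a1 σ φ)) h1
    exact mp2 (bImp_swap T (MForm.B σ) (MForm.B φ)) h2

lemma mprov_of_list :
    ∀ (L : List MForm) (t : MForm),
      (∀ δ ∈ L, MProv δ) →
      (∀ vB vG, (∀ δ ∈ L, δ.evalAt vB vG = true) → t.evalAt vB vG = true) →
      MProv t := by
  intro L
  induction L with
  | nil =>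
    intro t _ h
    exact mtaut t (fun vB vG => h vB vG (by simp))
  | cons δ L ih =>
    intro t hp h
    have hδ : MProv δ := hp δ (by simp)
    have hi : MProv (δ.impl t) := by
      apply ih (δ.impl t) (fun d hd => hp d (by simp [hd]))
      intro vB vG hL
      show (!(δ.evalAt vB vG) || t.evalAt vB vG) = true
      cases hd : δ.evalAt vB vG
      · rfl
      · have : t.evalAt vB vG = true := by
          apply h vB vG
          intro d hd'
          rcases List.mem_cons.mp hd' with rfl | hd''
          · exact hd
          · exact hL d hd''
        simp [this]
    exact mp2 hi hδ

/-- The `B`-atoms of a mental state formula. -/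
def atomsB : MForm → List PForm
  | .B φ => [φ]
  | .G _ => []
  | .fals => []
  | .impl a b => atomsB a ++ atomsB b

/-- The `G`-atoms of a mental state formula. -/
def atomsG : MForm → List PForm
  | .B _ => []
  | .G φ => [φ]
  | .fals => []
  | .impl a b => atomsG a ++ atomsG b

lemma msat_agree (m : MState) (vB vG : PForm → Bool) :
    ∀ χ : MForm,
      (∀ φ ∈ atomsB χ, (CEntails m.bel φ ↔ vB φ = true)) →
      (∀ φ ∈ atomsG χ, (φ ∈ m.goals ↔ vG φ = true)) →
      (MSat m χ ↔ χ.evalAt vB vG = true)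
  | .B φ, hB, _ => by
    simpa [MSat, MForm.evalAt] using hB φ (by simp [atomsB])
  | .G φ, _, hG => by
    simpa [MSat, MForm.evalAt] using hG φ (by simp [atomsG])
  | .fals, _, _ => by simp [MSat, MForm.evalAt]
  | .impl a b, hB, hG => by
    have ia := msat_agree m vB vG a
      (fun φ hφ => hB φ (by simp [atomsB, hφ]))
      (fun φ hφ => hG φ (by simp [atomsG, hφ]))
    have ib := msat_agree m vB vG b
      (fun φ hφ => hB φ (by simp [atomsB, hφ]))
      (fun φ hφ => hG φ (by simp [atomsG, hφ]))
    show (MSat m a → MSat m b) ↔ (!(a.evalAt vB vG) || b.evalAt vB vG) = true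
    rw [ia, ib]
    cases a.evalAt vB vG <;> cases b.evalAt vB vG <;> simp

/-- The finitely many relevant provable instances of the axioms for `χ`. -/
def gAxList (χ : MForm) : List MForm :=
  (MForm.B PForm.fals).neg ::
  (((atomsG χ).map fun ψ => if Taut ψ.neg then (MForm.G ψ).neg else topM) ++
   ((atomsG χ).map fun ψ => (MForm.B ψ).impl (MForm.G ψ).neg) ++
   ((atomsG χ).flatMap fun ψ => (atomsG χ).map fun ψ' =>
      if Taut (ψ.impl ψ') then
        (MForm.B ψ').neg.impl ((MForm.G ψ).impl (MForm.G ψ')) else topM) ++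
   ((atomsB χ ++ atomsG χ).sublists.flatMap fun S =>
      (PForm.fals :: (atomsB χ ++ atomsG χ)).map fun φ =>
        if CEntails {x | x ∈ S} φ then bImp S (MForm.B φ) else topM))

lemma topM_prov : MProv topM := by
  apply mtaut; intro vB vG; rfl

lemma gNeg_prov {ψ : PForm} (h : Taut ψ.neg) : MProv (MForm.G ψ).neg := by
  have h1 : MProv ((MForm.G ψ).impl (MForm.G PForm.fals)) :=
    mp2 (MProv.a5 ψ PForm.fals h) MProv.a2
  exact mp2 (mp2 (schemeContra (MForm.G ψ) (MForm.G PForm.fals)) h1) MProv.a3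

lemma gAxList_prov (χ : MForm) : ∀ δ ∈ gAxList χ, MProv δ := by
  intro δ hδ
  rw [gAxList, List.mem_cons] at hδ
  rcases hδ with rfl | hδ
  · exact MProv.a2
  rw [List.mem_append] at hδ
  rcases hδ with hδ | hδ
  · rw [List.mem_append] at hδ
    rcases hδ with hδ | hδ
    · rw [List.mem_append] at hδ
      rcases hδ with hδ | hδ
      · obtain ⟨ψ, _, rfl⟩ := List.mem_map.mp hδ
        by_cases h : Taut ψ.neg
        · simpa [h] using gNeg_prov h
        · simpa [h] using topM_prov
      · obtain ⟨ψ, _, rfl⟩ := List.mem_map.mp hδ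
        exact MProv.a4 ψ
    · obtain ⟨ψ, _, hδ'⟩ := List.mem_flatMap.mp hδ
      obtain ⟨ψ', _, rfl⟩ := List.mem_map.mp hδ'
      by_cases h : Taut (ψ.impl ψ')
      · simpa [h] using MProv.a5 ψ ψ' h
      · simpa [h] using topM_prov
  · obtain ⟨S, _, hδ'⟩ := List.mem_flatMap.mp hδ
    obtain ⟨φ, _, rfl⟩ := List.mem_map.mp hδ'
    by_cases h : CEntails {x | x ∈ S} φ
    · simpa [h] using bImp_of_centails S φ h
    · simpa [h] using topM_prov

/-- The key model-existence theorem. -/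
theorem satisfy (χ : MForm) (h : ¬ MProv χ.neg) :
    ∃ m : MState, IsMState m ∧ MSat m χ := by
  by_contra hno
  push_neg at hno
  apply h
  apply mprov_of_list (gAxList χ) χ.neg (gAxList_prov χ)
  intro vB vG hL
  by_contra hne
  have hχ : χ.evalAt vB vG = true := by
    revert hne
    show ¬((!(χ.evalAt vB vG) || MForm.fals.evalAt vB vG) = true) → _
    cases χ.evalAt vB vG <;> simp [MForm.evalAt]
  -- extract the instance facts
  have hA2 : vB PForm.fals = false := by
    have := hL ((MForm.B PForm.fals).neg)
      (by rw [gAxList]; exact List.mem_cons_self)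
    revert this
    show (!(vB PForm.fals) || MForm.fals.evalAt vB vG) = true → _
    cases vB PForm.fals <;> simp [MForm.evalAt]
  set A : List PForm := atomsB χ ++ atomsG χ with hA
  set Sg : Set PForm := {σ | σ ∈ A ∧ vB σ = true} with hSg
  have h_bimp : ∀ S ∈ A.sublists, ∀ φ ∈ PForm.fals :: A,
      CEntails {x | x ∈ S} φ → (∀ σ ∈ S, vB σ = true) → vB φ = true := by
    intro S hS φ hφ hce hall
    have hmem : (if CEntails {x | x ∈ S} φ then bImp S (MForm.B φ) else topM)
        ∈ gAxList χ := by
      rw [gAxList]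
      exact List.mem_cons_of_mem _ (List.mem_append_right _
        (List.mem_flatMap.mpr ⟨S, hS, List.mem_map.mpr ⟨φ, hφ, rfl⟩⟩))
    have := hL _ hmem
    rw [if_pos hce] at this
    exact (evalAt_bImp S (MForm.B φ) vB vG).mp this hall
  have h_ent : ∀ φ ∈ PForm.fals :: A, CEntails Sg φ → vB φ = true := by
    intro φ hφ hce
    have hfe : {x | x ∈ A.filter fun σ => vB σ} = Sg := by
      ext x
      simp [hSg, List.mem_filter]
    apply h_bimp (A.filter fun σ => vB σ)
      (List.mem_sublists.mpr List.filter_sublist) φ hφ (hfe ▸ hce)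
    intro σ hσ
    exact (List.mem_filter.mp hσ).2
  have hcons : ¬ CEntails Sg PForm.fals := by
    intro hce
    have := h_ent PForm.fals (by simp) hce
    rw [hA2] at this
    exact Bool.false_ne_true this
  have hA4 : ∀ ψ ∈ atomsG χ, vG ψ = true → vB ψ = false := by
    intro ψ hψ hg
    have hmem : ((MForm.B ψ).impl (MForm.G ψ).neg) ∈ gAxList χ := by
      rw [gAxList]
      exact List.mem_cons_of_mem _ (List.mem_append_left _
        (List.mem_append_left _ (List.mem_append_right _
          (List.mem_map.mpr ⟨ψ, hψ, rfl⟩))))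
    have := hL _ hmem
    revert this
    show (!(vB ψ) || (!(vG ψ) || MForm.fals.evalAt vB vG)) = true → _
    rw [hg]
    cases vB ψ <;> simp [MForm.evalAt]
  have hT1 : ∀ ψ ∈ atomsG χ, Taut ψ.neg → vG ψ = false := by
    intro ψ hψ ht
    have hmem : (if Taut ψ.neg then (MForm.G ψ).neg else topM) ∈ gAxList χ := by
      rw [gAxList]
      exact List.mem_cons_of_mem _ (List.mem_append_left _
        (List.mem_append_left _ (List.mem_append_left _
          (List.mem_map.mpr ⟨ψ, hψ, rfl⟩))))
    have := hL _ hmem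
    rw [if_pos ht] at this
    revert this
    show (!(vG ψ) || MForm.fals.evalAt vB vG) = true → _
    cases vG ψ <;> simp [MForm.evalAt]
  have hA5 : ∀ ψ ∈ atomsG χ, ∀ ψ' ∈ atomsG χ, Taut (ψ.impl ψ') →
      vG ψ = true → vG ψ' = false → vB ψ' = true := by
    intro ψ hψ ψ' hψ' ht hg hg'
    have hmem : (if Taut (ψ.impl ψ') then
        (MForm.B ψ').neg.impl ((MForm.G ψ).impl (MForm.G ψ')) else topM)
        ∈ gAxList χ := by
      rw [gAxList]
      exact List.mem_cons_of_mem _ (List.mem_append_left _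
        (List.mem_append_right _
          (List.mem_flatMap.mpr ⟨ψ, hψ, List.mem_map.mpr ⟨ψ', hψ', rfl⟩⟩)))
    have := hL _ hmem
    rw [if_pos ht] at this
    revert this
    show (!((!(vB ψ') || MForm.fals.evalAt vB vG)) ||
      (!(vG ψ) || vG ψ')) = true → _
    rw [hg, hg']
    cases vB ψ' <;> simp [MForm.evalAt]
  -- the goal base
  set Gg : Set PForm := {γ | ∃ ψ ∈ atomsG χ, vG ψ = true ∧ Taut (ψ.impl γ) ∧
    ¬ CEntails Sg γ ∧ ¬ Taut γ.neg} with hGg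
  set m : MState := ⟨Sg, Gg⟩ with hm
  have gB : ∀ φ ∈ atomsB χ, (CEntails Sg φ ↔ vB φ = true) := by
    intro φ hφ
    constructor
    · exact h_ent φ (by simp [hA, hφ])
    · intro hv
      exact centails_mem (by exact ⟨by simp [hA, hφ], hv⟩)
  have gG : ∀ ψ ∈ atomsG χ, (ψ ∈ Gg ↔ vG ψ = true) := by
    intro ψ hψ
    constructor
    · intro hmem
      by_contra hvg
      have hvg' : vG ψ = false := by
        cases hvgc : vG ψ
        · rfl
        · exact absurd hvgc hvg
      obtain ⟨ψ₀, hψ₀, hg₀, ht₀, hnc, hnt⟩ := hmem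
      have hvb := hA5 ψ₀ hψ₀ ψ hψ ht₀ hg₀ hvg'
      exact hnc (centails_mem ⟨by simp [hA, hψ], hvb⟩)
    · intro hv
      refine ⟨ψ, hψ, hv, taut_refl ψ, ?_, ?_⟩
      · intro hce
        have := h_ent ψ (by simp [hA, hψ]) hce
        rw [hA4 ψ hψ hv] at this
        exact Bool.false_ne_true this
      · intro ht
        have := hT1 ψ hψ ht
        rw [hv] at this
        simp at this
  have hIs : IsMState m := by
    constructor
    · exact hcons
    · intro γ hγ
      obtain ⟨ψ, hψ, hg, ht, hnc, hnt⟩ := hγ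
      refine ⟨⟨hnc, hnt⟩, ?_⟩
      intro γ' ht' hnc' hnt'
      exact ⟨ψ, hψ, hg, taut_trans ht ht', hnc', hnt'⟩
  have hsat : MSat m χ := (msat_agree m vB vG χ gB gG).mpr hχ
  exact hno m hIs hsat

end
end MSAux

/-- Completeness of the mental state calculus ⊢_M; equivalently,
every ⊢_M-consistent mental state formula is satisfied by some mental
state. -/
theorem mprov_complete :
    (∀ χ : MForm, MValid χ → MProv χ) ∧
    (∀ χ : MForm, ¬ MProv χ.neg → ∃ m : MState, IsMState m ∧ MSat m χ) := by
  refine ⟨?_, fun χ h => MSAux.satisfy χ h⟩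
  intro χ hv
  by_contra hnp
  have hdn : MProv (χ.neg.neg.impl χ) := by
    apply MSAux.mtaut
    intro vB vG
    simp only [MForm.neg, MForm.evalAt]
    cases χ.evalAt vB vG <;> rfl
  have h1 : ¬ MProv χ.neg.neg := fun h => hnp (MSAux.mp2 hdn h)
  obtain ⟨m, hm, hsat⟩ := MSAux.satisfy χ.neg h1
  exact hsat (hv m hm)
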